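/- Scale-invariant rational solution (73) of the cubic heat equation. The function v(t,x) = 2√2·x/(x² + 6t) satisfies v_t(t,x) = v_{xx}(t,x) − v(t,x)³ at every point (t,x) of any open subset of ℝ×ℝ on which x² + 6t ≠ 0. -/

import Mathlib

open Real Set

/-- Spatial first derivative of `z ↦ c z / (z² + a)`. -/
lemma aux_space (a c y : ℝ) (h : y ^ 2 + a ≠ 0) :
    HasDerivAt (fun z : ℝ => c * z / (z ^ 2 + a))
      ((c * (y ^ 2 + a) - c * y * (2 * y)) / (y ^ 2 + a) ^ 2) y := by
  have hc : HasDerivAt (fun z : ℝ => c * z) c y := by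
    simpa using (hasDerivAt_id y).const_mul c
  have hd : HasDerivAt (fun z : ℝ => z ^ 2 + a) (2 * y) y := by
    simpa using (hasDerivAt_pow 2 y).add_const a
  exact hc.div hd h

lemma aux_space_deriv (a c y : ℝ) (h : y ^ 2 + a ≠ 0) :
    deriv (fun z : ℝ => c * z / (z ^ 2 + a)) y
      = c * (a - y ^ 2) / (y ^ 2 + a) ^ 2 := by
  rw [(aux_space a c y h).deriv]
  ring

/-- Scale-invariant rational solution (73) of the cubic heat equation
`v_t = v_{xx} − v³`. -/
theorem cubic_heat_rational_solution
    (v : ℝ → ℝ → ℝ)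
    (hv : ∀ t x : ℝ, v t x = 2 * Real.sqrt 2 * x / (x ^ 2 + 6 * t)) :
    ∀ t x : ℝ, x ^ 2 + 6 * t ≠ 0 →
      deriv (fun s => v s x) t
        = deriv (fun y => deriv (fun z => v t z) y) x - v t x ^ 3 := by
  intro t x hD
  set c : ℝ := 2 * Real.sqrt 2 with hc
  -- time derivative
  have htime : HasDerivAt (fun s : ℝ => v s x)
      ((0 * (x ^ 2 + 6 * t) - c * x * 6) / (x ^ 2 + 6 * t) ^ 2) t := by
    have hnum : HasDerivAt (fun _ : ℝ => c * x) 0 t := hasDerivAt_const t _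
    have hden : HasDerivAt (fun s : ℝ => x ^ 2 + 6 * s) 6 t := by
      simpa using ((hasDerivAt_id t).const_mul 6).const_add (x ^ 2)
    have := hnum.div hden hD
    simpa only [hv, Pi.div_def] using this
  -- spatial second derivative
  have hev : (fun y : ℝ => deriv (fun z => v t z) y)
      =ᶠ[nhds x] fun y : ℝ => c * (6 * t - y ^ 2) / (y ^ 2 + 6 * t) ^ 2 := by
    have hopen : IsOpen {y : ℝ | y ^ 2 + 6 * t ≠ 0} :=
      isOpen_ne.preimage (by continuity)
    filter_upwards [hopen.mem_nhds hD] with y hy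
    have := aux_space_deriv (6 * t) c y hy
    simp only [hv]
    exact this
  have hG : HasDerivAt (fun y : ℝ => c * (6 * t - y ^ 2) / (y ^ 2 + 6 * t) ^ 2)
      ((c * (0 - 2 * x) * ((x ^ 2 + 6 * t) ^ 2)
          - c * (6 * t - x ^ 2) * (2 * (x ^ 2 + 6 * t) ^ 1 * (2 * x)))
        / ((x ^ 2 + 6 * t) ^ 2) ^ 2) x := by
    have hnum : HasDerivAt (fun y : ℝ => c * (6 * t - y ^ 2)) (c * (0 - 2 * x)) x := by
      have : HasDerivAt (fun y : ℝ => 6 * t - y ^ 2) (0 - 2 * x) x := by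
        simpa [Pi.sub_def] using (hasDerivAt_const x (6 * t)).sub (hasDerivAt_pow 2 x)
      exact this.const_mul c
    have hd : HasDerivAt (fun y : ℝ => y ^ 2 + 6 * t) (2 * x) x := by
      simpa using (hasDerivAt_pow 2 x).add_const (6 * t)
    have hden : HasDerivAt (fun y : ℝ => (y ^ 2 + 6 * t) ^ 2)
        (2 * (x ^ 2 + 6 * t) ^ 1 * (2 * x)) x := hd.pow 2
    exact hnum.div hden (pow_ne_zero 2 hD)
  have hsecond : deriv (fun y : ℝ => deriv (fun z => v t z) y) x
      = (c * (0 - 2 * x) * ((x ^ 2 + 6 * t) ^ 2)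
          - c * (6 * t - x ^ 2) * (2 * (x ^ 2 + 6 * t) ^ 1 * (2 * x)))
        / ((x ^ 2 + 6 * t) ^ 2) ^ 2 := by
    rw [hev.deriv_eq, hG.deriv]
  rw [htime.deriv, hsecond, hv]
  have h2 : Real.sqrt 2 ^ 2 = 2 := Real.sq_sqrt (by norm_num)
  rw [hc]
  have h3 : Real.sqrt 2 ^ 3 = 2 * Real.sqrt 2 := by
    rw [pow_succ, h2]
  field_simp
  ring_nf
  rw [h3]
  ring
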